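/- Every 2-dimensional weakly neighbourly antipodal convex polygon has at most 3 vertices. -/

import Mathlib

open scoped RealInnerProductSpace

private lemma param_seg {E : Type*} [AddCommGroup E] [Module ℝ E] {p q r : ℝ}
    (h1 : p < q) (h2 : q < r) (y v : E) :
    y + q • v ∈ segment ℝ (y + p • v) (y + r • v) := by
  have hrp : (0:ℝ) < r - p := by linarith
  have hq1 : (0:ℝ) ≤ r - q := by linarith
  have hq2 : (0:ℝ) ≤ q - p := by linarith
  refine ⟨(r - q) / (r - p), (q - p) / (r - p), by positivity, by positivity, ?_, ?_⟩
  · field_simp; ring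
  · match_scalars
    · field_simp; ring
    · field_simp; ring

private lemma middle_extreme {P : Set (EuclideanSpace ℝ (Fin 2))} {A B C : EuclideanSpace ℝ (Fin 2)}
    (hA : A ∈ P) (hC : C ∈ P) (hB : B ∈ Set.extremePoints ℝ P)
    (hseg : B ∈ segment ℝ A C) (h1 : A ≠ B) (h2 : C ≠ B) : False := by
  rcases (mem_extremePoints_iff_forall_segment.mp hB).2 A hA C hC hseg with h | h
  · exact h1 h
  · exact h2 h

private lemma orth_rep {n u : EuclideanSpace ℝ (Fin 2)} (hn : n ≠ 0) (h : ⟪n, u⟫ = 0) :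
    ∃ s : ℝ, u = s • (!₂[-(n 1), n 0] : EuclideanSpace ℝ (Fin 2)) := by
  have hinner : n 0 * u 0 + n 1 * u 1 = 0 := by
    simp [PiLp.inner_apply, RCLike.inner_apply, Fin.sum_univ_two] at h; linarith
  have hne : n 0 ≠ 0 ∨ n 1 ≠ 0 := by
    by_contra hcon
    push_neg at hcon
    exact hn (by ext i; fin_cases i <;> simp [hcon.1, hcon.2])
  have hden : (0:ℝ) < n 0 ^ 2 + n 1 ^ 2 := by
    rcases hne with h' | h' <;> positivity
  refine ⟨(u 1 * n 0 - u 0 * n 1) / (n 0 ^ 2 + n 1 ^ 2), ?_⟩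
  ext i
  fin_cases i
  · simp only [PiLp.smul_apply, smul_eq_mul, Matrix.cons_val_zero, Fin.zero_eta]
    field_simp
    linear_combination n 0 * hinner
  · simp only [PiLp.smul_apply, smul_eq_mul, Matrix.cons_val_one, Matrix.cons_val_zero, Fin.mk_one]
    field_simp
    linear_combination n 1 * hinner

private lemma no_three_on_line {P : Set (EuclideanSpace ℝ (Fin 2))}
    {n : EuclideanSpace ℝ (Fin 2)} (hn : n ≠ 0) {c0 : ℝ}
    {x y z : EuclideanSpace ℝ (Fin 2)}
    (hxP : x ∈ P) (hyP : y ∈ P) (hzP : z ∈ P)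
    (hx : x ∈ Set.extremePoints ℝ P) (hy : y ∈ Set.extremePoints ℝ P)
    (hz : z ∈ Set.extremePoints ℝ P)
    (hxy : x ≠ y) (hxz : x ≠ z) (hyz : y ≠ z)
    (h1 : ⟪n, x⟫ = c0) (h2 : ⟪n, y⟫ = c0) (h3 : ⟪n, z⟫ = c0) : False := by
  obtain ⟨s, hs⟩ := orth_rep hn (show ⟪n, x - y⟫ = 0 by rw [inner_sub_right, h1, h2]; ring)
  obtain ⟨t, ht⟩ := orth_rep hn (show ⟪n, z - y⟫ = 0 by rw [inner_sub_right, h3, h2]; ring)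
  set v : EuclideanSpace ℝ (Fin 2) := !₂[-(n 1), n 0] with hv
  have hx' : x = y + s • v := by rw [← hs]; abel
  have hz' : z = y + t • v := by rw [← ht]; abel
  have hy' : y = y + (0:ℝ) • v := by simp
  have hs0 : s ≠ 0 := by
    rintro rfl; apply hxy; rw [hx']; simp
  have ht0 : t ≠ 0 := by
    rintro rfl; apply hyz; rw [hz']; simp
  have hst : s ≠ t := by
    rintro rfl; apply hxz; rw [hx', hz']
  rcases lt_trichotomy s 0 with hsneg | rfl | hspos
  · rcases lt_trichotomy t 0 with htneg | rfl | htpos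
    · rcases lt_trichotomy s t with hlt | rfl | hgt
      · exact middle_extreme hxP hyP hz
          (by rw [hx', hz']; simpa using param_seg hlt htneg y v) hxz hyz
      · exact absurd rfl hst
      · exact middle_extreme hzP hyP hx
          (by rw [hx', hz']; simpa using param_seg hgt hsneg y v) (Ne.symm hxz) (Ne.symm hxy)
    · exact absurd rfl ht0
    · exact middle_extreme hxP hzP hy
        (by rw [hx', hz']; simpa using param_seg hsneg htpos y v) hxy (Ne.symm hyz)
  · exact absurd rfl hs0
  · rcases lt_trichotomy t 0 with htneg | rfl | htpos
    · exact middle_extreme hzP hxP hy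
        (by rw [hx', hz']; simpa using param_seg htneg hspos y v) (Ne.symm hyz) hxy
    · exact absurd rfl ht0
    · rcases lt_trichotomy s t with hlt | rfl | hgt
      · exact middle_extreme hyP hzP hx
          (by rw [hx', hz']; simpa using param_seg hspos hlt y v) (Ne.symm hxy) (Ne.symm hxz)
      · exact absurd rfl hst
      · exact middle_extreme hyP hxP hz
          (by rw [hx', hz']; simpa using param_seg htpos hgt y v) hyz hxz

private lemma one_in_three {P : Set (EuclideanSpace ℝ (Fin 2))} (hPc : Convex ℝ P)
    {a b c d : EuclideanSpace ℝ (Fin 2)}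
    (hb : b ∈ P) (hc : c ∈ P) (hd : d ∈ P)
    (ha : a ∈ Set.extremePoints ℝ P)
    (hab : a ≠ b) (hac : a ≠ c) (had : a ≠ d)
    (h : a ∈ convexHull ℝ ({b, c, d} : Set (EuclideanSpace ℝ (Fin 2)))) : False := by
  rw [show ({b, c, d} : Set (EuclideanSpace ℝ (Fin 2))) = insert b {c, d} from rfl,
    convexHull_insert ⟨c, by simp⟩, convexHull_pair] at h
  rw [mem_convexJoin] at h
  obtain ⟨x, hx, q, hq, hseg⟩ := h
  rw [Set.mem_singleton_iff] at hx
  rw [hx] at hseg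
  have hqP : q ∈ P := hPc.segment_subset hc hd hq
  rcases (mem_extremePoints_iff_forall_segment.mp ha).2 b hb q hqP hseg with h' | h'
  · exact hab h'.symm
  · subst h'
    rcases (mem_extremePoints_iff_forall_segment.mp ha).2 c hc d hd hq with h' | h'
    · exact hac h'.symm
    · exact had h'.symm

def IsFaceOf (K F : Set (EuclideanSpace ℝ (Fin 2))) : Prop :=
  ∃ (n : EuclideanSpace ℝ (Fin 2)) (c : ℝ), n ≠ 0 ∧ (∀ x ∈ K, ⟪n, x⟫ ≤ c) ∧
    (∃ x ∈ K, ⟪n, x⟫ = c) ∧ F = {x ∈ K | ⟪n, x⟫ = c}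

private lemma cross {P : Set (EuclideanSpace ℝ (Fin 2))} {V : Finset (EuclideanSpace ℝ (Fin 2))}
    (hP : P = convexHull ℝ (V : Set (EuclideanSpace ℝ (Fin 2))))
    (hV : (V : Set (EuclideanSpace ℝ (Fin 2))) = Set.extremePoints ℝ P)
    (hwn : ∀ u ∈ V, ∀ w ∈ V, ∃ F, IsFaceOf P F ∧ u ∈ F ∧ w ∈ F)
    {a b c d p : EuclideanSpace ℝ (Fin 2)}
    (haV : a ∈ V) (hbV : b ∈ V) (hcV : c ∈ V) (hdV : d ∈ V)
    (hab : a ≠ b) (hac : a ≠ c) (had : a ≠ d) (hbc : b ≠ c) (hbd : b ≠ d) (hcd : c ≠ d)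
    (hp1 : p ∈ segment ℝ a c) (hp2 : p ∈ segment ℝ b d) : False := by
  have hVP : ∀ x ∈ V, x ∈ P := fun x hx => hP ▸ subset_convexHull ℝ _ (Finset.mem_coe.mpr hx)
  have hVe : ∀ x ∈ V, x ∈ Set.extremePoints ℝ P := fun x hx => hV ▸ Finset.mem_coe.mpr hx
  obtain ⟨F, ⟨n, c0, hn, hle, -, hFeq⟩, haF, hcF⟩ := hwn a haV c hcV
  rw [hFeq] at haF hcF
  have ha0 : ⟪n, a⟫ = c0 := haF.2
  have hc0 : ⟪n, c⟫ = c0 := hcF.2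
  obtain ⟨s, t, hs, ht, hst, hpe⟩ := hp1
  have hpc : ⟪n, p⟫ = c0 := by
    rw [← hpe, inner_add_right, real_inner_smul_right, real_inner_smul_right, ha0, hc0]
    linear_combination c0 * hst
  obtain ⟨s', t', hs', ht', hst', hpe'⟩ := hp2
  have hb_le : ⟪n, b⟫ ≤ c0 := hle b (hVP b hbV)
  have hd_le : ⟪n, d⟫ ≤ c0 := hle d (hVP d hdV)
  have hpc' : s' * ⟪n, b⟫ + t' * ⟪n, d⟫ = c0 := by
    rw [← hpc, ← hpe', inner_add_right, real_inner_smul_right, real_inner_smul_right]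
  have key : ⟪n, b⟫ = c0 ∨ ⟪n, d⟫ = c0 := by
    by_contra hcon
    push_neg at hcon
    have h1 : ⟪n, b⟫ < c0 := lt_of_le_of_ne hb_le hcon.1
    have h2 : ⟪n, d⟫ < c0 := lt_of_le_of_ne hd_le hcon.2
    rcases eq_or_lt_of_le hs' with h' | h'
    · have ht1 : t' = 1 := by linarith
      rw [← h', ht1] at hpc'
      rw [zero_mul, one_mul, zero_add] at hpc'
      exact hcon.2 hpc'
    · have h3 : s' * c0 + t' * c0 = c0 := by linear_combination c0 * hst'
      nlinarith [mul_pos h' (sub_pos.mpr h1), mul_nonneg ht' (sub_pos.mpr h2).le, h3]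
  rcases key with hk | hk
  · exact no_three_on_line hn (hVP a haV) (hVP b hbV) (hVP c hcV)
      (hVe a haV) (hVe b hbV) (hVe c hcV) hab hac hbc ha0 hk hc0
  · exact no_three_on_line hn (hVP a haV) (hVP d hdV) (hVP c hcV)
      (hVe a haV) (hVe d hdV) (hVe c hcV) had hac (Ne.symm hcd) ha0 hk hc0

theorem wn_antipodal_polygon_at_most_three_vertices
    (P : Set (EuclideanSpace ℝ (Fin 2))) (V : Finset (EuclideanSpace ℝ (Fin 2)))
    (hP : P = convexHull ℝ (V : Set (EuclideanSpace ℝ (Fin 2))))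
    (hV : (V : Set (EuclideanSpace ℝ (Fin 2))) = Set.extremePoints ℝ P)
    (hfull : (interior P).Nonempty)
    (hwn : ∀ u ∈ V, ∀ w ∈ V, ∃ F, IsFaceOf P F ∧ u ∈ F ∧ w ∈ F)
    (hap : ∀ u ∈ V, ∀ w ∈ V, u ≠ w → ∃ n : EuclideanSpace ℝ (Fin 2), n ≠ 0 ∧
      (∀ x ∈ P, ⟪n, x⟫ ≤ ⟪n, u⟫) ∧ (∀ x ∈ P, ⟪n, w⟫ ≤ ⟪n, x⟫) ∧ ⟪n, u⟫ ≠ ⟪n, w⟫) :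
    V.card ≤ 3 := by
  classical
  by_contra hcard
  push_neg at hcard
  obtain ⟨T, hTsub, hT4⟩ := Finset.exists_subset_card_eq (show 4 ≤ V.card from hcard)
  obtain ⟨a, haT⟩ := Finset.card_pos.mp (by rw [hT4]; norm_num)
  have hTe3 : (T.erase a).card = 3 := by rw [Finset.card_erase_of_mem haT, hT4]
  obtain ⟨b, c, d, hbc, hbd, hcd, hTe⟩ := Finset.card_eq_three.mp hTe3
  have hbT : b ∈ T.erase a := by rw [hTe]; simp
  have hcT : c ∈ T.erase a := by rw [hTe]; simp
  have hdT : d ∈ T.erase a := by rw [hTe]; simp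
  have hab : a ≠ b := fun h => (Finset.mem_erase.mp hbT).1 h.symm
  have hac : a ≠ c := fun h => (Finset.mem_erase.mp hcT).1 h.symm
  have had : a ≠ d := fun h => (Finset.mem_erase.mp hdT).1 h.symm
  have haV : a ∈ V := hTsub haT
  have hbV : b ∈ V := hTsub (Finset.mem_erase.mp hbT).2
  have hcV : c ∈ V := hTsub (Finset.mem_erase.mp hcT).2
  have hdV : d ∈ V := hTsub (Finset.mem_erase.mp hdT).2
  have hPc : Convex ℝ P := hP ▸ convex_convexHull ℝ _
  have hVP : ∀ x ∈ V, x ∈ P := fun x hx => hP ▸ subset_convexHull ℝ _ (Finset.mem_coe.mpr hx)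
  have hVe : ∀ x ∈ V, x ∈ Set.extremePoints ℝ P := fun x hx => hV ▸ Finset.mem_coe.mpr hx
  have hdep : ¬ AffineIndependent ℝ (![a, b, c, d] : Fin 4 → EuclideanSpace ℝ (Fin 2)) := by
    intro h
    have h1 := h.card_le_finrank_succ
    have h2 : Module.finrank ℝ (vectorSpan ℝ (Set.range (![a, b, c, d] : Fin 4 → EuclideanSpace ℝ (Fin 2)))) ≤ 2 := by
      have := Submodule.finrank_le (vectorSpan ℝ (Set.range (![a, b, c, d] : Fin 4 → EuclideanSpace ℝ (Fin 2))))
      rwa [finrank_euclideanSpace_fin] at this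
    simp [Fintype.card_fin] at h1
    omega
  obtain ⟨I, p, hp⟩ := Convex.radon_partition hdep
  have hpI := hp.1
  have hpIc := hp.2
  by_cases h0 : (0 : Fin 4) ∈ I <;> by_cases h1 : (1 : Fin 4) ∈ I <;>
    by_cases h2 : (2 : Fin 4) ∈ I <;> by_cases h3 : (3 : Fin 4) ∈ I
  · have hI : I = ({0, 1, 2, 3} : Set (Fin 4)) := by ext x; fin_cases x <;> simp [h0, h1, h2, h3]
    have hIc : Iᶜ = (∅ : Set (Fin 4)) := by rw [hI]; ext x; fin_cases x <;> simp [h0, h1, h2, h3]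
    rw [hIc] at hpIc
    simp at hpIc
  · have hI : I = ({0, 1, 2} : Set (Fin 4)) := by ext x; fin_cases x <;> simp [h0, h1, h2, h3]
    have hIc : Iᶜ = ({3} : Set (Fin 4)) := by rw [hI]; ext x; fin_cases x <;> simp [h0, h1, h2, h3]
    rw [hI] at hpI
    rw [hIc] at hpIc
    simp at hpIc
    have him : (![a, b, c, d] : Fin 4 → EuclideanSpace ℝ (Fin 2)) '' {0, 1, 2} = {a, b, c} := by
      simp [Set.image_insert_eq]
    rw [him, hpIc] at hpI
    exact one_in_three hPc (hVP a haV) (hVP b hbV) (hVP c hcV) (hVe d hdV) had.symm hbd.symm hcd.symm hpI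
  · have hI : I = ({0, 1, 3} : Set (Fin 4)) := by ext x; fin_cases x <;> simp [h0, h1, h2, h3]
    have hIc : Iᶜ = ({2} : Set (Fin 4)) := by rw [hI]; ext x; fin_cases x <;> simp [h0, h1, h2, h3]
    rw [hI] at hpI
    rw [hIc] at hpIc
    simp at hpIc
    have him : (![a, b, c, d] : Fin 4 → EuclideanSpace ℝ (Fin 2)) '' {0, 1, 3} = {a, b, d} := by
      simp [Set.image_insert_eq]
    rw [him, hpIc] at hpI
    exact one_in_three hPc (hVP a haV) (hVP b hbV) (hVP d hdV) (hVe c hcV) hac.symm hbc.symm hcd hpI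
  · have hI : I = ({0, 1} : Set (Fin 4)) := by ext x; fin_cases x <;> simp [h0, h1, h2, h3]
    have hIc : Iᶜ = ({2, 3} : Set (Fin 4)) := by rw [hI]; ext x; fin_cases x <;> simp [h0, h1, h2, h3]
    rw [hI] at hpI
    rw [hIc] at hpIc
    have him1 : (![a, b, c, d] : Fin 4 → EuclideanSpace ℝ (Fin 2)) '' {0, 1} = {a, b} := by
      simp [Set.image_insert_eq]
    have him2 : (![a, b, c, d] : Fin 4 → EuclideanSpace ℝ (Fin 2)) '' {2, 3} = {c, d} := by
      simp [Set.image_insert_eq]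
    rw [him1, convexHull_pair] at hpI
    rw [him2, convexHull_pair] at hpIc
    exact cross hP hV hwn haV hcV hbV hdV hac hab had hbc.symm hcd hbd hpI hpIc
  · have hI : I = ({0, 2, 3} : Set (Fin 4)) := by ext x; fin_cases x <;> simp [h0, h1, h2, h3]
    have hIc : Iᶜ = ({1} : Set (Fin 4)) := by rw [hI]; ext x; fin_cases x <;> simp [h0, h1, h2, h3]
    rw [hI] at hpI
    rw [hIc] at hpIc
    simp at hpIc
    have him : (![a, b, c, d] : Fin 4 → EuclideanSpace ℝ (Fin 2)) '' {0, 2, 3} = {a, c, d} := by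
      simp [Set.image_insert_eq]
    rw [him, hpIc] at hpI
    exact one_in_three hPc (hVP a haV) (hVP c hcV) (hVP d hdV) (hVe b hbV) hab.symm hbc hbd hpI
  · have hI : I = ({0, 2} : Set (Fin 4)) := by ext x; fin_cases x <;> simp [h0, h1, h2, h3]
    have hIc : Iᶜ = ({1, 3} : Set (Fin 4)) := by rw [hI]; ext x; fin_cases x <;> simp [h0, h1, h2, h3]
    rw [hI] at hpI
    rw [hIc] at hpIc
    have him1 : (![a, b, c, d] : Fin 4 → EuclideanSpace ℝ (Fin 2)) '' {0, 2} = {a, c} := by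
      simp [Set.image_insert_eq]
    have him2 : (![a, b, c, d] : Fin 4 → EuclideanSpace ℝ (Fin 2)) '' {1, 3} = {b, d} := by
      simp [Set.image_insert_eq]
    rw [him1, convexHull_pair] at hpI
    rw [him2, convexHull_pair] at hpIc
    exact cross hP hV hwn haV hbV hcV hdV hab hac had hbc hbd hcd hpI hpIc
  · have hI : I = ({0, 3} : Set (Fin 4)) := by ext x; fin_cases x <;> simp [h0, h1, h2, h3]
    have hIc : Iᶜ = ({1, 2} : Set (Fin 4)) := by rw [hI]; ext x; fin_cases x <;> simp [h0, h1, h2, h3]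
    rw [hI] at hpI
    rw [hIc] at hpIc
    have him1 : (![a, b, c, d] : Fin 4 → EuclideanSpace ℝ (Fin 2)) '' {0, 3} = {a, d} := by
      simp [Set.image_insert_eq]
    have him2 : (![a, b, c, d] : Fin 4 → EuclideanSpace ℝ (Fin 2)) '' {1, 2} = {b, c} := by
      simp [Set.image_insert_eq]
    rw [him1, convexHull_pair] at hpI
    rw [him2, convexHull_pair] at hpIc
    exact cross hP hV hwn haV hbV hdV hcV hab had hac hbd hbc hcd.symm hpI hpIc
  · have hI : I = ({0} : Set (Fin 4)) := by ext x; fin_cases x <;> simp [h0, h1, h2, h3]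
    have hIc : Iᶜ = ({1, 2, 3} : Set (Fin 4)) := by rw [hI]; ext x; fin_cases x <;> simp [h0, h1, h2, h3]
    rw [hI] at hpI
    rw [hIc] at hpIc
    simp at hpI
    have him : (![a, b, c, d] : Fin 4 → EuclideanSpace ℝ (Fin 2)) '' {1, 2, 3} = {b, c, d} := by
      simp [Set.image_insert_eq]
    rw [him, hpI] at hpIc
    exact one_in_three hPc (hVP b hbV) (hVP c hcV) (hVP d hdV) (hVe a haV) hab hac had hpIc
  · have hI : I = ({1, 2, 3} : Set (Fin 4)) := by ext x; fin_cases x <;> simp [h0, h1, h2, h3]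
    have hIc : Iᶜ = ({0} : Set (Fin 4)) := by rw [hI]; ext x; fin_cases x <;> simp [h0, h1, h2, h3]
    rw [hI] at hpI
    rw [hIc] at hpIc
    simp at hpIc
    have him : (![a, b, c, d] : Fin 4 → EuclideanSpace ℝ (Fin 2)) '' {1, 2, 3} = {b, c, d} := by
      simp [Set.image_insert_eq]
    rw [him, hpIc] at hpI
    exact one_in_three hPc (hVP b hbV) (hVP c hcV) (hVP d hdV) (hVe a haV) hab hac had hpI
  · have hI : I = ({1, 2} : Set (Fin 4)) := by ext x; fin_cases x <;> simp [h0, h1, h2, h3]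
    have hIc : Iᶜ = ({0, 3} : Set (Fin 4)) := by rw [hI]; ext x; fin_cases x <;> simp [h0, h1, h2, h3]
    rw [hI] at hpI
    rw [hIc] at hpIc
    have him1 : (![a, b, c, d] : Fin 4 → EuclideanSpace ℝ (Fin 2)) '' {1, 2} = {b, c} := by
      simp [Set.image_insert_eq]
    have him2 : (![a, b, c, d] : Fin 4 → EuclideanSpace ℝ (Fin 2)) '' {0, 3} = {a, d} := by
      simp [Set.image_insert_eq]
    rw [him1, convexHull_pair] at hpI
    rw [him2, convexHull_pair] at hpIc
    exact cross hP hV hwn hbV haV hcV hdV hab.symm hbc hbd hac had hcd hpI hpIc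
  · have hI : I = ({1, 3} : Set (Fin 4)) := by ext x; fin_cases x <;> simp [h0, h1, h2, h3]
    have hIc : Iᶜ = ({0, 2} : Set (Fin 4)) := by rw [hI]; ext x; fin_cases x <;> simp [h0, h1, h2, h3]
    rw [hI] at hpI
    rw [hIc] at hpIc
    have him1 : (![a, b, c, d] : Fin 4 → EuclideanSpace ℝ (Fin 2)) '' {1, 3} = {b, d} := by
      simp [Set.image_insert_eq]
    have him2 : (![a, b, c, d] : Fin 4 → EuclideanSpace ℝ (Fin 2)) '' {0, 2} = {a, c} := by
      simp [Set.image_insert_eq]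
    rw [him1, convexHull_pair] at hpI
    rw [him2, convexHull_pair] at hpIc
    exact cross hP hV hwn hbV haV hdV hcV hab.symm hbd hbc had hac hcd.symm hpI hpIc
  · have hI : I = ({1} : Set (Fin 4)) := by ext x; fin_cases x <;> simp [h0, h1, h2, h3]
    have hIc : Iᶜ = ({0, 2, 3} : Set (Fin 4)) := by rw [hI]; ext x; fin_cases x <;> simp [h0, h1, h2, h3]
    rw [hI] at hpI
    rw [hIc] at hpIc
    simp at hpI
    have him : (![a, b, c, d] : Fin 4 → EuclideanSpace ℝ (Fin 2)) '' {0, 2, 3} = {a, c, d} := by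
      simp [Set.image_insert_eq]
    rw [him, hpI] at hpIc
    exact one_in_three hPc (hVP a haV) (hVP c hcV) (hVP d hdV) (hVe b hbV) hab.symm hbc hbd hpIc
  · have hI : I = ({2, 3} : Set (Fin 4)) := by ext x; fin_cases x <;> simp [h0, h1, h2, h3]
    have hIc : Iᶜ = ({0, 1} : Set (Fin 4)) := by rw [hI]; ext x; fin_cases x <;> simp [h0, h1, h2, h3]
    rw [hI] at hpI
    rw [hIc] at hpIc
    have him1 : (![a, b, c, d] : Fin 4 → EuclideanSpace ℝ (Fin 2)) '' {2, 3} = {c, d} := by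
      simp [Set.image_insert_eq]
    have him2 : (![a, b, c, d] : Fin 4 → EuclideanSpace ℝ (Fin 2)) '' {0, 1} = {a, b} := by
      simp [Set.image_insert_eq]
    rw [him1, convexHull_pair] at hpI
    rw [him2, convexHull_pair] at hpIc
    exact cross hP hV hwn hcV haV hdV hbV hac.symm hcd hbc.symm had hab hbd.symm hpI hpIc
  · have hI : I = ({2} : Set (Fin 4)) := by ext x; fin_cases x <;> simp [h0, h1, h2, h3]
    have hIc : Iᶜ = ({0, 1, 3} : Set (Fin 4)) := by rw [hI]; ext x; fin_cases x <;> simp [h0, h1, h2, h3]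
    rw [hI] at hpI
    rw [hIc] at hpIc
    simp at hpI
    have him : (![a, b, c, d] : Fin 4 → EuclideanSpace ℝ (Fin 2)) '' {0, 1, 3} = {a, b, d} := by
      simp [Set.image_insert_eq]
    rw [him, hpI] at hpIc
    exact one_in_three hPc (hVP a haV) (hVP b hbV) (hVP d hdV) (hVe c hcV) hac.symm hbc.symm hcd hpIc
  · have hI : I = ({3} : Set (Fin 4)) := by ext x; fin_cases x <;> simp [h0, h1, h2, h3]
    have hIc : Iᶜ = ({0, 1, 2} : Set (Fin 4)) := by rw [hI]; ext x; fin_cases x <;> simp [h0, h1, h2, h3]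
    rw [hI] at hpI
    rw [hIc] at hpIc
    simp at hpI
    have him : (![a, b, c, d] : Fin 4 → EuclideanSpace ℝ (Fin 2)) '' {0, 1, 2} = {a, b, c} := by
      simp [Set.image_insert_eq]
    rw [him, hpI] at hpIc
    exact one_in_three hPc (hVP a haV) (hVP b hbV) (hVP c hcV) (hVe d hdV) had.symm hbd.symm hcd.symm hpIc
  · have hI : I = (∅ : Set (Fin 4)) := by ext x; fin_cases x <;> simp [h0, h1, h2, h3]
    have hIc : Iᶜ = ({0, 1, 2, 3} : Set (Fin 4)) := by rw [hI]; ext x; fin_cases x <;> simp [h0, h1, h2, h3]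
    rw [hI] at hpI
    simp at hpI
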